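/- The subword complexity of the infinite Tribonacci word is 2n + 1: for every n ≥ 0, the number of distinct factors of length n of T equals 2n + 1. -/

import Mathlib

/-- The Tribonacci morphism: 0 → 01, 1 → 02, 2 → 0. -/
def tribMap (c : ℕ) : List ℕ := if c = 0 then [0,1] else if c = 1 then [0,2] else [0]

/-- Iterates of the Tribonacci morphism on the word `0`. -/
def tribIter : ℕ → List ℕ
  | 0 => [0]
  | k+1 => (tribIter k).flatMap tribMap

/-- The infinite Tribonacci word, the fixed point starting with 0 of 0→01, 1→02, 2→0. -/
def tribWord (n : ℕ) : ℕ := (tribIter (n+1)).getD n 0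

/-- The Tribonacci numbers. -/
def trib : ℕ → ℕ
  | 0 => 0
  | 1 => 1
  | 2 => 1
  | n+3 => trib (n+2) + trib (n+1) + trib n

namespace TribProof

/-- Apply the morphism to a finite word. -/
def sig (l : List ℕ) : List ℕ := l.flatMap tribMap

lemma tribMap_cases (c : ℕ) : tribMap c = [0,1] ∨ tribMap c = [0,2] ∨ tribMap c = [0] := by
  unfold tribMap; split_ifs <;> simp

lemma tribMap_ne_nil (c : ℕ) : tribMap c ≠ [] := by
  rcases tribMap_cases c with h | h | h <;> simp [h]

lemma mem_tribMap_le {c x : ℕ} (h : x ∈ tribMap c) : x ≤ 2 := by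
  rcases tribMap_cases c with hc | hc | hc <;> rw [hc] at h <;> simp at h <;> omega

lemma sig_nil : sig [] = [] := rfl

lemma sig_cons (c : ℕ) (l : List ℕ) : sig (c :: l) = tribMap c ++ sig l := by
  simp [sig]

lemma sig_append (l l' : List ℕ) : sig (l ++ l') = sig l ++ sig l' := by
  simp [sig]

lemma sig_head {l : List ℕ} (h : l ≠ []) : ∃ t, sig l = 0 :: t := by
  rcases l with _ | ⟨c, l⟩
  · simp at h
  · rw [sig_cons]
    rcases tribMap_cases c with hc | hc | hc <;> rw [hc] <;> exact ⟨_, rfl⟩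

lemma sig_eq_nil {l : List ℕ} (h : sig l = []) : l = [] := by
  rcases l with _ | ⟨c, l⟩
  · rfl
  · rw [sig_cons] at h
    exact absurd (List.append_eq_nil_iff.mp h).1 (tribMap_ne_nil c)

lemma mem_sig_le {l : List ℕ} {x : ℕ} (h : x ∈ sig l) : x ≤ 2 := by
  simp only [sig, List.mem_flatMap] at h
  obtain ⟨c, _, hx⟩ := h
  exact mem_tribMap_le hx

lemma length_le_sig (l : List ℕ) : l.length ≤ (sig l).length := by
  induction l with
  | nil => simp [sig]
  | cons c l ih =>
    rw [sig_cons, List.length_append, List.length_cons]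
    have : 1 ≤ (tribMap c).length := List.length_pos_iff.mpr (tribMap_ne_nil c)
    omega

lemma tribIter_succ (k : ℕ) : tribIter (k+1) = sig (tribIter k) := rfl

lemma tribIter_head (k : ℕ) : ∃ t, tribIter k = 0 :: t := by
  induction k with
  | zero => exact ⟨[], rfl⟩
  | succ k ih =>
    obtain ⟨t, ht⟩ := ih
    exact sig_head (by simp [ht])

lemma tribIter_ne_nil (k : ℕ) : tribIter k ≠ [] := by
  obtain ⟨t, ht⟩ := tribIter_head k; simp [ht]

lemma length_tribIter (k : ℕ) : k < (tribIter k).length := by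
  induction k with
  | zero => simp [tribIter]
  | succ k ih =>
    obtain ⟨t, ht⟩ := tribIter_head k
    have : tribIter (k+1) = [0,1] ++ sig t := by
      rw [tribIter_succ, ht, sig_cons]; rfl
    rw [this, List.length_append]
    have h1 := length_le_sig t
    have h2 : (tribIter k).length = t.length + 1 := by rw [ht]; simp
    simp only [List.length_cons] at *
    omega

lemma mem_tribIter_le {k x : ℕ} (h : x ∈ tribIter k) : x ≤ 2 := by
  induction k with
  | zero => simp [tribIter] at h; omega
  | succ k ih => exact mem_sig_le h

lemma sig_prefix {l l' : List ℕ} (h : l <+: l') : sig l <+: sig l' := by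
  obtain ⟨t, rfl⟩ := h
  exact ⟨sig t, (sig_append l t).symm⟩

lemma length_tribIter_lt (k : ℕ) : (tribIter k).length < (tribIter (k+1)).length := by
  obtain ⟨t, ht⟩ := tribIter_head k
  have h : tribIter (k+1) = [0,1] ++ sig t := by rw [tribIter_succ, ht, sig_cons]; rfl
  rw [h, ht]
  simp only [List.length_append, List.length_cons]
  have := length_le_sig t
  simp at *
  omega

lemma tribIter_prefix_succ (k : ℕ) : tribIter k <+: tribIter (k+1) := by
  induction k with
  | zero => exact ⟨[1], rfl⟩
  | succ k ih => rw [tribIter_succ, tribIter_succ]; exact sig_prefix ih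

lemma tribIter_prefix {k m : ℕ} (h : k ≤ m) : tribIter k <+: tribIter m := by
  induction m with
  | zero => interval_cases k; exact List.prefix_refl _
  | succ m ih =>
    rcases Nat.lt_or_ge k (m+1) with h' | h'
    · exact (ih (by omega)).trans (tribIter_prefix_succ m)
    · have : k = m + 1 := by omega
      subst this; exact List.prefix_refl _


lemma getD_eq_of_prefix {A B : List ℕ} (h : A <+: B) {i : ℕ} (hi : i < A.length) :
    A.getD i 0 = B.getD i 0 := by
  obtain ⟨t, rfl⟩ := h
  rw [List.getD_append _ _ _ _ hi]

lemma tribWord_eq {i k : ℕ} (hik : i < (tribIter k).length) :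
    tribWord i = (tribIter k).getD i 0 := by
  unfold tribWord
  rcases Nat.le_total k (i+1) with h | h
  · exact (getD_eq_of_prefix (tribIter_prefix h) hik).symm
  · exact getD_eq_of_prefix (tribIter_prefix h) (Nat.lt_of_le_of_lt (Nat.le_refl _) (by
      have := length_tribIter (i+1); omega))

/-- A length-`n` window of the Tribonacci word at position `i`. -/
def win (i n : ℕ) : List ℕ := (List.range n).map (fun j => tribWord (i + j))

lemma win_length (i n : ℕ) : (win i n).length = n := by simp [win]

lemma win_zero (i : ℕ) : win i 0 = [] := rfl

lemma win_succ (i n : ℕ) : win i (n+1) = tribWord i :: win (i+1) n := by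
  apply List.ext_getElem
  · simp [win]
  · intro j h1 h2
    rcases j with _ | j
    · simp [win]
    · have hj : j < n := by simpa [win] using h1
      simp only [List.getElem_cons_succ]
      unfold win at h1 h2 ⊢
      simp only [List.getElem_map, List.getElem_range]
      congr 1
      omega

lemma win_getElem (i n : ℕ) (j : ℕ) (hj : j < n) :
    (win i n)[j]'(by rw [win_length]; exact hj) = tribWord (i + j) := by
  simp [win]

lemma win_slice {i n k : ℕ} (h : i + n ≤ (tribIter k).length) :
    win i n = ((tribIter k).drop i).take n := by
  apply List.ext_getElem
  · rw [win_length, List.length_take, List.length_drop]; omega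
  · intro j h1 h2
    rw [win_getElem i n j (by rwa [win_length] at h1)]
    rw [List.getElem_take, List.getElem_drop]
    have hlt : i + j < (tribIter k).length := by
      rw [win_length] at h1; omega
    rw [tribWord_eq hlt, List.getD_eq_getElem _ _ hlt]

/-- `w` is a factor of the Tribonacci word. -/
def Fac (w : List ℕ) : Prop := ∃ k, w <:+: tribIter k

lemma fac_win (i n : ℕ) : Fac (win i n) := by
  refine ⟨i + n, ?_⟩
  have h : i + n ≤ (tribIter (i+n)).length := le_of_lt (length_tribIter _)
  rw [win_slice h]
  exact ((List.take_prefix _ _).isInfix).trans ((List.drop_suffix _ _).isInfix)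

lemma prefix_eq_win0 {w : List ℕ} {k : ℕ} (h : w <+: tribIter k) : w = win 0 w.length := by
  have hlen : w.length ≤ (tribIter k).length := h.length_le
  rw [win_slice (k := k) (by omega), List.drop_zero]
  exact (List.prefix_iff_eq_take.mp h)

lemma win0_prefix (n : ℕ) : win 0 n <+: tribIter n := by
  rw [win_slice (k := n) (by have := length_tribIter n; omega), List.drop_zero]
  exact List.take_prefix _ _

lemma fac_to_win {w : List ℕ} (h : Fac w) : ∃ i, w = win i w.length := by
  obtain ⟨k, s, t, hst⟩ := h
  refine ⟨s.length, ?_⟩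
  have hlen : s.length + w.length ≤ (tribIter k).length := by
    have : (tribIter k).length = s.length + w.length + t.length := by
      rw [← hst]; simp; omega
    omega
  rw [win_slice hlen, ← hst, List.append_assoc, List.drop_left, List.take_left]

lemma fac_mem_le {w : List ℕ} (h : Fac w) {x : ℕ} (hx : x ∈ w) : x ≤ 2 := by
  obtain ⟨k, hk⟩ := h
  exact mem_tribIter_le (hk.mem hx)

lemma fac_infix {w w' : List ℕ} (h : w' <:+: w) (hw : Fac w) : Fac w' := by
  obtain ⟨k, hk⟩ := hw
  exact ⟨k, h.trans hk⟩

lemma fac_append_right {w : List ℕ} (h : Fac w) : ∃ e, e ≤ 2 ∧ Fac (w ++ [e]) := by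
  obtain ⟨k, s, t, hst⟩ := h
  rcases t with _ | ⟨e, t'⟩
  · obtain ⟨r, hr⟩ := tribIter_prefix_succ k
    have hrne : r ≠ [] := by
      intro h0
      have h1 := length_tribIter_lt k
      rw [← hr, h0, List.append_nil] at h1
      omega
    rcases r with _ | ⟨e, r'⟩
    · exact absurd rfl hrne
    · refine ⟨e, ?_, ⟨k+1, s, r', ?_⟩⟩
      · exact mem_tribIter_le (by rw [← hr]; simp)
      · rw [← hr, ← hst]; simp
  · refine ⟨e, ?_, ⟨k, s, t', ?_⟩⟩
    · exact mem_tribIter_le (by rw [← hst]; simp)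
    · rw [← hst]; simp

lemma fac_sig {w : List ℕ} (h : Fac w) : Fac (sig w) := by
  obtain ⟨k, s, t, hst⟩ := h
  exact ⟨k+1, sig s, sig t, by rw [tribIter_succ, ← hst, sig_append, sig_append]⟩


/-- Synchronization: a cut before a `0` (or at the end) lifts through the morphism. -/
lemma sync : ∀ (L x y : List ℕ), sig L = x ++ y → (∀ e t, y = e :: t → e = 0) →
    ∃ L1 L2, L = L1 ++ L2 ∧ sig L1 = x ∧ sig L2 = y := by
  intro L
  induction L with
  | nil =>
    intro x y h hy
    rw [sig_nil] at h
    have hx := List.append_eq_nil_iff.mp h.symm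
    exact ⟨[], [], by simp, by simp [sig_nil, hx.1], by simp [sig_nil, hx.2]⟩
  | cons c L ih =>
    intro x y h hy
    rcases x with _ | ⟨x0, x'⟩
    · exact ⟨[], c :: L, by simp, rfl, by simpa using h⟩
    · rw [sig_cons] at h
      rcases tribMap_cases c with hc | hc | hc <;> rw [hc] at h
      · -- tribMap c = [0,1]
        simp only [List.cons_append, List.nil_append, List.cons.injEq] at h
        obtain ⟨hx0, h⟩ := h
        rcases x' with _ | ⟨x1, x''⟩
        · -- y = 1 :: sig L, contradiction
          simp only [List.nil_append] at h
          exact absurd (hy 1 (sig L) h.symm) (by norm_num)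
        · simp only [List.cons_append, List.cons.injEq] at h
          obtain ⟨hx1, h⟩ := h
          obtain ⟨L1, L2, hL, h1, h2⟩ := ih x'' y h hy
          exact ⟨c :: L1, L2, by rw [hL]; rfl, by rw [sig_cons, hc, h1, hx0, hx1]; rfl, h2⟩
      · -- tribMap c = [0,2]
        simp only [List.cons_append, List.nil_append, List.cons.injEq] at h
        obtain ⟨hx0, h⟩ := h
        rcases x' with _ | ⟨x1, x''⟩
        · simp only [List.nil_append] at h
          exact absurd (hy 2 (sig L) h.symm) (by norm_num)
        · simp only [List.cons_append, List.cons.injEq] at h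
          obtain ⟨hx1, h⟩ := h
          obtain ⟨L1, L2, hL, h1, h2⟩ := ih x'' y h hy
          exact ⟨c :: L1, L2, by rw [hL]; rfl, by rw [sig_cons, hc, h1, hx0, hx1]; rfl, h2⟩
      · -- tribMap c = [0]
        simp only [List.cons_append, List.nil_append, List.cons.injEq] at h
        obtain ⟨hx0, h⟩ := h
        obtain ⟨L1, L2, hL, h1, h2⟩ := ih x' y h hy
        exact ⟨c :: L1, L2, by rw [hL]; rfl, by rw [sig_cons, hc, h1, hx0]; rfl, h2⟩

/-- In an image of the morphism, every `1` or `2` is followed by `0` (if anything follows). -/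
lemma after12 : ∀ (L x : List ℕ) (c e : ℕ) (t : List ℕ), sig L = x ++ c :: e :: t →
    (c = 1 ∨ c = 2) → e = 0 := by
  intro L
  induction L with
  | nil =>
    intro x c e t h _
    rw [sig_nil] at h
    exact absurd (List.append_eq_nil_iff.mp h.symm).2 (by simp)
  | cons c0 L ih =>
    intro x c e t h hc
    rcases tribMap_cases c0 with h0 | h0 | h0 <;> rw [sig_cons, h0] at h
    · rcases x with _ | ⟨x0, x'⟩
      · simp only [List.nil_append, List.cons_append, List.cons.injEq] at h
        omega
      · simp only [List.cons_append, List.cons.injEq] at h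
        rcases x' with _ | ⟨x1, x''⟩
        · simp only [List.nil_append, List.cons.injEq] at h
          obtain ⟨_, _, h2⟩ := h
          have hLne : L ≠ [] := by
            intro h0; rw [h0, sig_nil] at h2; exact absurd h2.symm (by simp)
          obtain ⟨tt, htt⟩ := sig_head hLne
          rw [htt] at h2
          exact ((List.cons.injEq _ _ _ _ ▸ h2) : _ ∧ _).1.symm
        · simp only [List.cons_append, List.cons.injEq] at h
          exact ih x'' c e t h.2.2 hc
    · rcases x with _ | ⟨x0, x'⟩
      · simp only [List.nil_append, List.cons_append, List.cons.injEq] at h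
        omega
      · simp only [List.cons_append, List.cons.injEq] at h
        rcases x' with _ | ⟨x1, x''⟩
        · simp only [List.nil_append, List.cons.injEq] at h
          obtain ⟨_, _, h2⟩ := h
          have hLne : L ≠ [] := by
            intro h0; rw [h0, sig_nil] at h2; exact absurd h2.symm (by simp)
          obtain ⟨tt, htt⟩ := sig_head hLne
          rw [htt] at h2
          exact ((List.cons.injEq _ _ _ _ ▸ h2) : _ ∧ _).1.symm
        · simp only [List.cons_append, List.cons.injEq] at h
          exact ih x'' c e t h.2.2 hc
    · rcases x with _ | ⟨x0, x'⟩
      · simp only [List.nil_append, List.cons_append, List.cons.injEq] at h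
        omega
      · simp only [List.cons_append, List.cons.injEq] at h
        exact ih x' c e t h.2 hc


/-- Common prefixes of morphism images desubstitute to a common prefix. -/
lemma lemP : ∀ (n : ℕ) (w A B : List ℕ), w.length ≤ n →
    (∀ x ∈ A, x ≤ 2) → (∀ x ∈ B, x ≤ 2) →
    (∃ y, sig A = w ++ y) → (∃ z, sig B = w ++ z) →
    ∃ u s, (s = [] ∨ s = [0]) ∧ w = sig u ++ s ∧ u <+: A ∧ u <+: B ∧
      (w ≠ [] → u.length < w.length) := by
  intro n
  induction n with
  | zero =>
    intro w A B hw _ _ _ _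
    have hwn : w = [] := List.length_eq_zero_iff.mp (by omega)
    exact ⟨[], [], Or.inl rfl, by simp [hwn, sig_nil], List.nil_prefix, List.nil_prefix,
      by simp [hwn]⟩
  | succ n ih =>
    rintro w A B hw hA hB ⟨y, hy⟩ ⟨z, hz⟩
    rcases w with _ | ⟨w0, w'⟩
    · exact ⟨[], [], Or.inl rfl, by simp [sig_nil], List.nil_prefix, List.nil_prefix, by simp⟩
    rcases w' with _ | ⟨w1, w''⟩
    · -- w = [w0]; w0 = 0 since sig A starts with 0
      have hAne : A ≠ [] := by
        intro h0; rw [h0, sig_nil] at hy; exact absurd hy.symm (by simp)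
      obtain ⟨t, ht⟩ := sig_head hAne
      rw [ht] at hy
      have hw0 : w0 = 0 := by
        have := (List.cons.injEq _ _ _ _ ▸ hy : _ ∧ _).1
        omega
      exact ⟨[], [0], Or.inr rfl, by simp [sig_nil, hw0], List.nil_prefix, List.nil_prefix,
        by simp⟩
    · -- w = w0 :: w1 :: w''
      have hAne : A ≠ [] := by
        intro h0; rw [h0, sig_nil] at hy; exact absurd hy.symm (by simp)
      have hBne : B ≠ [] := by
        intro h0; rw [h0, sig_nil] at hz; exact absurd hz.symm (by simp)
      have hw0 : w0 = 0 := by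
        obtain ⟨t, ht⟩ := sig_head hAne
        have hy2 := hy
        rw [ht] at hy2
        have := (List.cons.injEq _ _ _ _ ▸ hy2 : _ ∧ _).1
        omega
      subst hw0
      rcases A with _ | ⟨a0, A'⟩; · exact absurd rfl hAne
      rcases B with _ | ⟨b0, B'⟩; · exact absurd rfl hBne
      have ha0 : a0 ≤ 2 := hA a0 (by simp)
      have hb0 : b0 ≤ 2 := hB b0 (by simp)
      have hA' : ∀ x ∈ A', x ≤ 2 := fun x hx => hA x (by simp [hx])
      have hB' : ∀ x ∈ B', x ≤ 2 := fun x hx => hB x (by simp [hx])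
      have hw1 : w1 ≤ 2 := by
        apply mem_sig_le (l := a0 :: A')
        rw [hy]; simp
      rw [sig_cons] at hy
      rw [sig_cons] at hz
      -- determine first letters from w1
      interval_cases w1
      · -- w1 = 0 : a0 = 2, b0 = 2
        have key : ∀ (c0 : ℕ) (C' : List ℕ) (yy : List ℕ), c0 ≤ 2 →
            tribMap c0 ++ sig C' = ((0:ℕ) :: 0 :: w'') ++ yy →
            c0 = 2 ∧ sig C' = (0 :: w'') ++ yy := by
          intro c0 C' yy hc0 h
          interval_cases c0
          · exfalso
            simp only [show tribMap 0 = [0,1] from rfl, List.cons_append, List.nil_append,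
              List.cons.injEq] at h
            omega
          · exfalso
            simp only [show tribMap 1 = [0,2] from rfl, List.cons_append, List.nil_append,
              List.cons.injEq] at h
            omega
          · simp only [show tribMap 2 = [0] from rfl, List.cons_append, List.nil_append,
              List.cons.injEq] at h
            exact ⟨rfl, h.2⟩
        obtain ⟨ha, hy'⟩ := key a0 A' y ha0 hy
        obtain ⟨hb, hz'⟩ := key b0 B' z hb0 hz
        obtain ⟨u', s, hs, hwu, hpa, hpb, hlt⟩ :=
          ih (0 :: w'') A' B' (by simp at hw ⊢; omega) hA' hB' ⟨y, hy'⟩ ⟨z, hz'⟩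
        refine ⟨2 :: u', s, hs, ?_, ?_, ?_, ?_⟩
        · rw [sig_cons, show tribMap 2 = [0] from rfl]
          simp only [List.cons_append, List.nil_append]
          rw [← hwu]
        · subst ha; exact List.cons_prefix_cons.mpr ⟨rfl, hpa⟩
        · subst hb; exact List.cons_prefix_cons.mpr ⟨rfl, hpb⟩
        · intro _
          have h1 : u'.length < (0 :: w'').length := hlt (by simp)
          simp at h1 ⊢
          omega
      · -- w1 = 1 : a0 = 0, b0 = 0
        have key : ∀ (c0 : ℕ) (C' : List ℕ) (yy : List ℕ), c0 ≤ 2 →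
            tribMap c0 ++ sig C' = ((0:ℕ) :: 1 :: w'') ++ yy →
            c0 = 0 ∧ sig C' = w'' ++ yy := by
          intro c0 C' yy hc0 h
          interval_cases c0
          · simp only [show tribMap 0 = [0,1] from rfl, List.cons_append, List.nil_append,
              List.cons.injEq] at h
            exact ⟨rfl, h.2.2⟩
          · exfalso
            simp only [show tribMap 1 = [0,2] from rfl, List.cons_append, List.nil_append,
              List.cons.injEq] at h
            omega
          · exfalso
            simp only [show tribMap 2 = [0] from rfl, List.cons_append, List.nil_append,
              List.cons.injEq] at h
            obtain ⟨-, h⟩ := h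
            have hC : C' ≠ [] := by
              intro h0; rw [h0, sig_nil] at h; exact absurd h.symm (by simp)
            obtain ⟨t, ht⟩ := sig_head hC
            rw [ht] at h
            have := (List.cons.injEq _ _ _ _ ▸ h : _ ∧ _).1
            omega
        obtain ⟨ha, hy'⟩ := key a0 A' y ha0 hy
        obtain ⟨hb, hz'⟩ := key b0 B' z hb0 hz
        obtain ⟨u', s, hs, hwu, hpa, hpb, hlt⟩ :=
          ih w'' A' B' (by simp at hw ⊢; omega) hA' hB' ⟨y, hy'⟩ ⟨z, hz'⟩
        refine ⟨0 :: u', s, hs, ?_, ?_, ?_, ?_⟩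
        · rw [sig_cons, show tribMap 0 = [0,1] from rfl]
          simp only [List.cons_append, List.nil_append]
          rw [← hwu]
        · subst ha; exact List.cons_prefix_cons.mpr ⟨rfl, hpa⟩
        · subst hb; exact List.cons_prefix_cons.mpr ⟨rfl, hpb⟩
        · intro _
          rcases List.eq_nil_or_concat w'' with h0 | ⟨l, e, rfl⟩
          · rw [h0] at hwu
            obtain ⟨h1, -⟩ := List.append_eq_nil_iff.mp hwu.symm
            have hu' : u' = [] := sig_eq_nil h1
            simp [hu', h0]
          · have h1 : u'.length < (l.concat e).length := hlt (by simp)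
            simp at h1 ⊢
            omega
      · -- w1 = 2 : a0 = 1, b0 = 1
        have key : ∀ (c0 : ℕ) (C' : List ℕ) (yy : List ℕ), c0 ≤ 2 →
            tribMap c0 ++ sig C' = ((0:ℕ) :: 2 :: w'') ++ yy →
            c0 = 1 ∧ sig C' = w'' ++ yy := by
          intro c0 C' yy hc0 h
          interval_cases c0
          · exfalso
            simp only [show tribMap 0 = [0,1] from rfl, List.cons_append, List.nil_append,
              List.cons.injEq] at h
            omega
          · simp only [show tribMap 1 = [0,2] from rfl, List.cons_append, List.nil_append,
              List.cons.injEq] at h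
            exact ⟨rfl, h.2.2⟩
          · exfalso
            simp only [show tribMap 2 = [0] from rfl, List.cons_append, List.nil_append,
              List.cons.injEq] at h
            obtain ⟨-, h⟩ := h
            have hC : C' ≠ [] := by
              intro h0; rw [h0, sig_nil] at h; exact absurd h.symm (by simp)
            obtain ⟨t, ht⟩ := sig_head hC
            rw [ht] at h
            have := (List.cons.injEq _ _ _ _ ▸ h : _ ∧ _).1
            omega
        obtain ⟨ha, hy'⟩ := key a0 A' y ha0 hy
        obtain ⟨hb, hz'⟩ := key b0 B' z hb0 hz
        obtain ⟨u', s, hs, hwu, hpa, hpb, hlt⟩ :=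
          ih w'' A' B' (by simp at hw ⊢; omega) hA' hB' ⟨y, hy'⟩ ⟨z, hz'⟩
        refine ⟨1 :: u', s, hs, ?_, ?_, ?_, ?_⟩
        · rw [sig_cons, show tribMap 1 = [0,2] from rfl]
          simp only [List.cons_append, List.nil_append]
          rw [← hwu]
        · subst ha; exact List.cons_prefix_cons.mpr ⟨rfl, hpa⟩
        · subst hb; exact List.cons_prefix_cons.mpr ⟨rfl, hpb⟩
        · intro _
          rcases List.eq_nil_or_concat w'' with h0 | ⟨l, e, rfl⟩
          · rw [h0] at hwu
            obtain ⟨h1, -⟩ := List.append_eq_nil_iff.mp hwu.symm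
            have hu' : u' = [] := sig_eq_nil h1
            simp [hu', h0]
          · have h1 : u'.length < (l.concat e).length := hlt (by simp)
            simp at h1 ⊢
            omega


lemma extension_step {w' : List ℕ} {x : ℕ} (hf : Fac (x :: 0 :: w')) :
    ∃ c l L2 m, c ≤ 2 ∧ tribIter m = l ++ [c] ++ L2 ∧
      (∃ yy, sig L2 = (0 :: w') ++ yy) ∧ (tribMap c).getLast? = some x := by
  obtain ⟨k, s, t, hst⟩ := hf
  rcases k with _ | m
  · exfalso
    have := congrArg List.length hst
    simp [tribIter] at this
    omega
  · rw [tribIter_succ] at hst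
    have hregroup : sig (tribIter m) = (s ++ [x]) ++ ((0 :: w') ++ t) := by
      rw [← hst]; simp
    obtain ⟨L1, L2, hL, h1, h2⟩ := sync (tribIter m) (s ++ [x]) ((0 :: w') ++ t)
      hregroup (by rintro e t' he; simpa using (List.cons.injEq _ _ _ _ ▸ he : _ ∧ _).1.symm)
    have hL1ne : L1 ≠ [] := by
      intro h0; rw [h0, sig_nil] at h1; exact absurd h1.symm (by simp)
    obtain ⟨l, c, hlc⟩ := List.eq_nil_or_concat L1 |>.resolve_left hL1ne
    refine ⟨c, l, L2, m, ?_, ?_, ⟨t, h2⟩, ?_⟩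
    · apply mem_tribIter_le (k := m)
      rw [hL, hlc]; simp
    · rw [hL, hlc]; simp
    · have h1' : sig l ++ tribMap c = s ++ [x] := by
        rw [← h1, hlc]
        simp [sig_append, sig_cons, sig_nil]
      have := congrArg List.getLast? h1'
      rwa [List.getLast?_append_of_ne_nil _ (tribMap_ne_nil c),
        List.getLast?_concat] at this

lemma getLast_tribMap_inj {c c' x : ℕ} (hc : c ≤ 2) (hc' : c' ≤ 2)
    (h : (tribMap c).getLast? = some x) (h' : (tribMap c').getLast? = some x) : c = c' := by
  interval_cases c <;> interval_cases c' <;> (try rfl) <;> (exfalso; simp [tribMap] at h h'; omega)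

lemma mainL : ∀ (n : ℕ) (w : List ℕ) (a b : ℕ), w.length ≤ n → a ≠ b →
    Fac (a :: w) → Fac (b :: w) → w = win 0 w.length := by
  intro n
  induction n with
  | zero =>
    intro w a b hw _ _ _
    have hw0 : w = [] := List.length_eq_zero_iff.mp (by omega)
    subst hw0
    simp [win]
  | succ n ih =>
    intro w a b hw hab hfa hfb
    rcases w with _ | ⟨w0, w'⟩
    · simp [win]
    have ha2 : a ≤ 2 := fac_mem_le hfa (by simp)
    have hb2 : b ≤ 2 := fac_mem_le hfb (by simp)
    -- the head of w is 0
    have hw0 : w0 = 0 := by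
      have hcase : ∃ c, (c = 1 ∨ c = 2) ∧ Fac (c :: w0 :: w') := by
        rcases Nat.lt_or_ge 0 a with h | h
        · exact ⟨a, by omega, hfa⟩
        · exact ⟨b, by omega, hfb⟩
      obtain ⟨c, hc12, hfc⟩ := hcase
      obtain ⟨k, s, t, hst⟩ := hfc
      rcases k with _ | m
      · exfalso
        have := congrArg List.length hst
        simp [tribIter] at this
        omega
      · rw [tribIter_succ] at hst
        exact after12 (tribIter m) s c w0 (w' ++ t) (by rw [← hst]; simp) hc12
    subst hw0
    obtain ⟨ca, la, L2a, ma, hca2, hIa, hya, hlasta⟩ := extension_step hfa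
    obtain ⟨cb, lb, L2b, mb, hcb2, hIb, hyb, hlastb⟩ := extension_step hfb
    have hcab : ca ≠ cb := by
      intro h0
      exact hab (Option.some_injective _ (by rw [← hlasta, h0, hlastb]))
    have hmemA : ∀ x ∈ L2a, x ≤ 2 := by
      intro x hx
      exact mem_tribIter_le (k := ma) (by rw [hIa]; simp [hx])
    have hmemB : ∀ x ∈ L2b, x ≤ 2 := by
      intro x hx
      exact mem_tribIter_le (k := mb) (by rw [hIb]; simp [hx])
    obtain ⟨u, s, hs, hwu, hpa, hpb, hlt⟩ :=
      lemP (0 :: w').length (0 :: w') L2a L2b le_rfl hmemA hmemB hya hyb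
    have hult : u.length < (0 :: w').length := hlt (by simp)
    have hfca : Fac (ca :: u) := by
      obtain ⟨r, hr⟩ := hpa
      exact ⟨ma, la, r, by rw [hIa, ← hr]; simp⟩
    have hfcb : Fac (cb :: u) := by
      obtain ⟨r, hr⟩ := hpb
      exact ⟨mb, lb, r, by rw [hIb, ← hr]; simp⟩
    have hu : u = win 0 u.length := ih u ca cb (by simp at hw hult ⊢; omega) hcab hfca hfcb
    -- now w = sig u ++ s is a prefix of the Tribonacci word
    obtain ⟨r, hr⟩ : win 0 u.length <+: tribIter u.length := win0_prefix u.length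
    rw [← hu] at hr
    have hrne : r ≠ [] := by
      intro h0
      have := congrArg List.length hr
      have h2 := length_tribIter u.length
      rw [h0] at this
      simp at this
      omega
    obtain ⟨r', hr'⟩ := sig_head hrne
    have hpre : (0 :: w') <+: tribIter (u.length + 1) := by
      rw [tribIter_succ, ← hr, sig_append, hr', hwu]
      rcases hs with hs | hs <;> rw [hs]
      · exact ⟨0 :: r', by simp⟩
      · exact ⟨r', by simp⟩
    exact prefix_eq_win0 hpre


lemma mainR : ∀ (n : ℕ) (a : ℕ), a ≤ 2 → Fac (a :: win 0 n) := by
  intro n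
  induction n using Nat.strong_induction_on with
  | _ n ih =>
    intro a ha
    rcases n with _ | n
    · have h0 : win 0 0 = [] := by simp [win]
      rw [h0]
      interval_cases a
      · exact ⟨0, [], [], rfl⟩
      · exact ⟨1, [0], [], rfl⟩
      · exact ⟨2, [0,1,0], [], rfl⟩
    · obtain ⟨y, hy⟩ := win0_prefix (n+1)
      rw [tribIter_succ] at hy
      obtain ⟨u, s, hs, hwu, hpa, -, hlt⟩ :=
        lemP (n+1) (win 0 (n+1)) (tribIter n) (tribIter n) (by rw [win_length])
          (fun x hx => mem_tribIter_le hx) (fun x hx => mem_tribIter_le hx)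
          ⟨y, hy.symm⟩ ⟨y, hy.symm⟩
      have hune : win 0 (n+1) ≠ [] := by
        intro h0
        have := win_length 0 (n+1)
        rw [h0] at this
        simp at this
      have hul : u.length < n+1 := by
        have := hlt hune
        rwa [win_length] at this
      have hu : u = win 0 u.length := prefix_eq_win0 (k := n) hpa
      rw [hwu]
      interval_cases a
      · -- a = 0, use c = 2
        have hfc : Fac (2 :: win 0 u.length) := ih u.length hul 2 (by norm_num)
        rw [← hu] at hfc
        obtain ⟨e, he2, hfce⟩ := fac_append_right hfc
        have hfs := fac_sig hfce
        obtain ⟨te, hte⟩ : ∃ te, tribMap e = 0 :: te := by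
          rcases tribMap_cases e with h|h|h <;> exact ⟨_, by rw [h]⟩
        have hsig : sig ((2 :: u) ++ [e]) = 0 :: (sig u ++ (0 :: te)) := by
          rw [sig_append, sig_cons, show tribMap 2 = [0] from rfl, sig_cons, sig_nil, hte]
          simp
        rw [hsig] at hfs
        apply fac_infix _ hfs
        apply List.IsPrefix.isInfix
        rcases hs with hs | hs <;> subst hs
        · exact ⟨0 :: te, by simp⟩
        · exact ⟨te, by simp⟩
      · -- a = 1, use c = 0
        have hfc : Fac (0 :: win 0 u.length) := ih u.length hul 0 (by norm_num)
        rw [← hu] at hfc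
        obtain ⟨e, he2, hfce⟩ := fac_append_right hfc
        have hfs := fac_sig hfce
        obtain ⟨te, hte⟩ : ∃ te, tribMap e = 0 :: te := by
          rcases tribMap_cases e with h|h|h <;> exact ⟨_, by rw [h]⟩
        have hsig : sig ((0 :: u) ++ [e]) = [0] ++ (1 :: (sig u ++ (0 :: te))) := by
          rw [sig_append, sig_cons, show tribMap 0 = [0,1] from rfl, sig_cons, sig_nil, hte]
          simp
        rw [hsig] at hfs
        apply fac_infix _ hfs
        rcases hs with hs | hs <;> subst hs
        · exact ⟨[0], 0 :: te, by simp⟩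
        · exact ⟨[0], te, by simp⟩
      · -- a = 2, use c = 1
        have hfc : Fac (1 :: win 0 u.length) := ih u.length hul 1 (by norm_num)
        rw [← hu] at hfc
        obtain ⟨e, he2, hfce⟩ := fac_append_right hfc
        have hfs := fac_sig hfce
        obtain ⟨te, hte⟩ : ∃ te, tribMap e = 0 :: te := by
          rcases tribMap_cases e with h|h|h <;> exact ⟨_, by rw [h]⟩
        have hsig : sig ((1 :: u) ++ [e]) = [0] ++ (2 :: (sig u ++ (0 :: te))) := by
          rw [sig_append, sig_cons, show tribMap 1 = [0,2] from rfl, sig_cons, sig_nil, hte]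
          simp
        rw [hsig] at hfs
        apply fac_infix _ hfs
        rcases hs with hs | hs <;> subst hs
        · exact ⟨[0], 0 :: te, by simp⟩
        · exact ⟨[0], te, by simp⟩


lemma tribWord_le (i : ℕ) : tribWord i ≤ 2 := by
  have h : i < (tribIter (i+1)).length := by have := length_tribIter (i+1); omega
  unfold tribWord
  rw [List.getD_eq_getElem _ _ h]
  exact mem_tribIter_le (List.getElem_mem _)

lemma sset_finite (n : ℕ) : {w : List ℕ | ∃ i, w = win i n}.Finite := by
  apply Set.Finite.subset
    (Set.finite_range (fun g : Fin n → Fin 3 => List.ofFn (fun j => (g j : ℕ))))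
  rintro w ⟨i, rfl⟩
  refine ⟨fun j => ⟨tribWord (i + j), by have := tribWord_le (i + (j : ℕ)); omega⟩, ?_⟩
  apply List.ext_getElem
  · simp [win]
  · intro j h1 h2
    simp [win]

lemma card_step (n : ℕ) :
    {w : List ℕ | ∃ i, w = win i (n+1)}.ncard
      = {w : List ℕ | ∃ i, w = win i n}.ncard + 2 := by
  set p := win 0 n with hp
  set S1 := {w : List ℕ | ∃ i, w = win i (n+1)} with hS1
  set S0 := {w : List ℕ | ∃ i, w = win i n} with hS0
  set T3 : Set (List ℕ) := {0 :: p, 1 :: p, 2 :: p} with hT3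
  have hfin1 : S1.Finite := sset_finite (n+1)
  have hfin0 : S0.Finite := sset_finite n
  have hT3sub : T3 ⊆ S1 := by
    intro v hv
    have hex : ∃ a, a ≤ 2 ∧ v = a :: p := by
      rcases hv with h | h | h
      · exact ⟨0, by norm_num, h⟩
      · exact ⟨1, by norm_num, h⟩
      · exact ⟨2, by norm_num, h⟩
    obtain ⟨a, ha, rfl⟩ := hex
    obtain ⟨i, hi⟩ := fac_to_win (mainR n a ha)
    refine ⟨i, ?_⟩
    have hlen : (a :: p).length = n + 1 := by simp [hp, win_length]
    rwa [hlen] at hi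
  have htail : ∀ i n', (win i (n'+1)).tail = win (i+1) n' := by
    intro i n'
    rw [win_succ]
    rfl
  have hT3card : T3.ncard = 3 := by
    rw [hT3]
    rw [Set.ncard_insert_of_notMem (by simp) (Set.toFinite _)]
    rw [Set.ncard_insert_of_notMem (by simp) (Set.toFinite _)]
    rw [Set.ncard_singleton]
  have himg : List.tail '' (S1 \ T3) = S0 \ {p} := by
    ext w
    constructor
    · rintro ⟨v, ⟨⟨i, rfl⟩, hvT3⟩, rfl⟩
      constructor
      · exact ⟨i+1, htail i n⟩
      · intro hmem
        simp only [Set.mem_singleton_iff] at hmem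
        apply hvT3
        have hv : win i (n+1) = tribWord i :: p := by
          rw [win_succ, ← hmem, htail i n]
        rw [hv, hT3]
        have := tribWord_le i
        interval_cases h : tribWord i
        · left; rfl
        · right; left; rfl
        · right; right; rfl
    · rintro ⟨⟨i, rfl⟩, hne⟩
      simp only [Set.mem_singleton_iff] at hne
      have hi0 : i ≠ 0 := by rintro rfl; exact hne rfl
      refine ⟨win (i-1) (n+1), ⟨⟨i-1, rfl⟩, ?_⟩, ?_⟩
      · intro hvT3
        apply hne
        have h1 : (win (i-1) (n+1)).tail = win i n := by
          rw [htail]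
          congr 1
          omega
        have h2 : (win (i-1) (n+1)).tail = p := by
          rcases hvT3 with h | h | h <;> rw [h] <;> rfl
        rw [← h1, h2]
      · rw [htail]
        congr 1
        omega
  have hinj : Set.InjOn List.tail (S1 \ T3) := by
    rintro v ⟨⟨i, rfl⟩, hvT⟩ v' ⟨⟨i', rfl⟩, hv'T⟩ ht
    rw [htail, htail] at ht
    by_contra hne
    have hheads : tribWord i ≠ tribWord i' := by
      intro h0
      apply hne
      rw [win_succ, win_succ, h0, ht]
    have hfa : Fac (tribWord i :: win (i'+1) n) := by
      rw [← ht, ← win_succ]; exact fac_win i (n+1)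
    have hfb : Fac (tribWord i' :: win (i'+1) n) := by
      rw [← win_succ]; exact fac_win i' (n+1)
    have hwp := mainL (win (i'+1) n).length (win (i'+1) n) _ _ le_rfl hheads hfa hfb
    rw [win_length] at hwp
    apply hvT
    rw [win_succ, ht, hwp, hT3]
    have := tribWord_le i
    interval_cases h : tribWord i
    · left; rfl
    · right; left; rfl
    · right; right; rfl
  have hpS0 : p ∈ S0 := ⟨0, rfl⟩
  have hS0pos : 1 ≤ S0.ncard := (Set.ncard_pos hfin0).mpr ⟨p, hpS0⟩
  have hdecomp : S1.ncard = T3.ncard + (S1 \ T3).ncard := by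
    rw [← Set.ncard_union_eq (Set.disjoint_sdiff_right) (hfin1.subset hT3sub)
      (hfin1.subset Set.diff_subset), Set.union_diff_cancel hT3sub]
  have himgcard : (S1 \ T3).ncard = (S0 \ {p}).ncard := by
    rw [← himg, Set.ncard_image_of_injOn hinj]
  have hdiffcard : (S0 \ {p}).ncard = S0.ncard - 1 := by
    rw [Set.ncard_diff_singleton_of_mem hpS0]
  rw [hdecomp, hT3card, himgcard, hdiffcard]
  omega

end TribProof

/-- The subword complexity of the Tribonacci word is `2n + 1`. -/
theorem tribWord_subword_complexity (n : ℕ) :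
    Set.ncard {w : List ℕ | ∃ i, w = (List.range n).map (fun j => tribWord (i + j))}
      = 2 * n + 1 := by
  have key : ∀ m, {w : List ℕ | ∃ i, w = TribProof.win i m}.ncard = 2 * m + 1 := by
    intro m
    induction m with
    | zero =>
      have h : {w : List ℕ | ∃ i, w = TribProof.win i 0} = {([] : List ℕ)} := by
        ext w
        simp [TribProof.win]
      rw [h, Set.ncard_singleton]
    | succ m ihm =>
      rw [TribProof.card_step m, ihm]
      ring
  exact key n
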